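/- Let s ∈ [0,1/2], let |ψ⟩ = (1/√2)|0⟩⊗|0⟩ + √(s/2)|1⟩⊗|1⟩ + √((1−s)/2)|2⟩⊗|2⟩ ∈ ℂ³⊗ℂ³, and let σ = ∑_{k=0,1} (I₃⊗K_k)|ψ⟩⟨ψ|(I₃⊗K_k)† be the state obtained by applying N_s to the second factor. Then S(Tr_b σ) + S(Tr_a σ) − S(σ) = 2, where Tr_b and Tr_a are the partial traces over the second and first tensor factors respectively. (This shows the entanglement-assisted classical capacity satisfies C_E(N_s) ≥ 2 for all s ∈ [0,1/2].) -/

import Mathlib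

open Matrix Kronecker ComplexOrder

section Helpers
open Polynomial
variable {n : Type*} [Fintype n] [DecidableEq n]

lemma scalarX_smul : Matrix.scalar n (X : ℂ[X]) = (X : ℂ[X]) • (1 : Matrix n n ℂ[X]) := by
  ext i j
  simp [Matrix.scalar_apply, Matrix.diagonal_apply, Matrix.one_apply, apply_ite]

lemma charpoly_unitary_conj (U A : Matrix n n ℂ) (hU : U * star U = 1) :
    (U * A * star U).charpoly = A.charpoly := by
  have hmm : ∀ B C' : Matrix n n ℂ, (C : ℂ →+* ℂ[X]).mapMatrix (B * C') =
      (C : ℂ →+* ℂ[X]).mapMatrix B * (C : ℂ →+* ℂ[X]).mapMatrix C' :=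
    fun B C' => _root_.map_mul (RingHom.mapMatrix (C : ℂ →+* ℂ[X])) B C'
  have hone : (C : ℂ →+* ℂ[X]).mapMatrix (U * star U) = 1 := by
    rw [hU]; exact _root_.map_one (RingHom.mapMatrix (C : ℂ →+* ℂ[X]))
  have hmap : charmatrix (U * A * star U) =
      (C : ℂ →+* ℂ[X]).mapMatrix U * charmatrix A * (C : ℂ →+* ℂ[X]).mapMatrix (star U) := by
    simp only [charmatrix, mul_sub, sub_mul]
    congr 1
    · rw [scalarX_smul, mul_smul_comm, mul_one, smul_mul_assoc, ← hmm, hU,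
        _root_.map_one (RingHom.mapMatrix (C : ℂ →+* ℂ[X]))]
    · rw [← hmm, ← hmm]
  have hdet : ((C : ℂ →+* ℂ[X]).mapMatrix U).det * ((C : ℂ →+* ℂ[X]).mapMatrix (star U)).det = 1 := by
    rw [← det_mul, ← hmm, hone, det_one]
  rw [Matrix.charpoly, hmap, det_mul, det_mul, Matrix.charpoly]
  calc ((C : ℂ →+* ℂ[X]).mapMatrix U).det * (charmatrix A).det *
        ((C : ℂ →+* ℂ[X]).mapMatrix (star U)).det
      = (charmatrix A).det * (((C : ℂ →+* ℂ[X]).mapMatrix U).det *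
        ((C : ℂ →+* ℂ[X]).mapMatrix (star U)).det) := by ring
    _ = (charmatrix A).det := by rw [hdet, mul_one]

lemma charpoly_diag (d : n → ℂ) :
    (Matrix.diagonal d).charpoly = ∏ i, (X - C (d i)) := by
  have h : charmatrix (Matrix.diagonal d) = Matrix.diagonal (fun i => X - C (d i)) := by
    ext i j
    by_cases h : i = j
    · subst h; simp
    · simp [charmatrix_apply_ne _ _ _ h, Matrix.diagonal_apply_ne _ h]
  rw [Matrix.charpoly, h, det_diagonal]

lemma dherm (d : n → ℝ) : (Matrix.diagonal (fun i => (d i : ℂ))).IsHermitian := by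
  rw [Matrix.IsHermitian, Matrix.diagonal_conjTranspose]
  ext i j
  simp only [Matrix.diagonal_apply, Pi.star_apply, Complex.star_def, Complex.conj_ofReal]

lemma herm_of_conj {A : Matrix n n ℂ} (d : n → ℝ) (U : Matrix n n ℂ)
    (h : A = U * Matrix.diagonal (fun i => (d i : ℂ)) * star U) : A.IsHermitian := by
  rw [h, Matrix.IsHermitian, Matrix.conjTranspose_mul, Matrix.conjTranspose_mul, (dherm d).eq,
    Matrix.star_eq_conjTranspose, Matrix.conjTranspose_conjTranspose, ← Matrix.mul_assoc]

lemma sum_g_eigenvalues {A : Matrix n n ℂ} (hA : A.IsHermitian) (d : n → ℝ)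
    (U : Matrix n n ℂ) (hU : U * star U = 1)
    (h : A = U * Matrix.diagonal (fun i => (d i : ℂ)) * star U) (g : ℝ → ℝ) :
    ∑ i, g (hA.eigenvalues i) = ∑ i, g (d i) := by
  have h1 : A.charpoly = ∏ i, (X - C ((hA.eigenvalues i : ℝ) : ℂ)) := by
    conv_lhs => rw [hA.spectral_theorem]
    rw [Unitary.conjStarAlgAut_apply, charpoly_unitary_conj _ _ (Matrix.mem_unitaryGroup_iff.mp (hA.eigenvectorUnitary).2),
      charpoly_diag]
    rfl
  have h2 : A.charpoly = ∏ i, (X - C ((d i : ℂ))) := by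
    conv_lhs => rw [h]
    rw [charpoly_unitary_conj _ _ hU, charpoly_diag]
  have key : Finset.univ.val.map (fun i => ((hA.eigenvalues i : ℝ) : ℂ))
      = Finset.univ.val.map (fun i => ((d i : ℝ) : ℂ)) := by
    have h3 := congrArg Polynomial.roots (h1.symm.trans h2)
    rwa [show (∏ i, (X - C ((hA.eigenvalues i : ℝ) : ℂ)))
        = ((Finset.univ.val.map (fun i => ((hA.eigenvalues i : ℝ) : ℂ))).map
            (fun a => X - C a)).prod by
          rw [Multiset.map_map]; rfl,
      show (∏ i, (X - C ((d i : ℝ) : ℂ)))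
        = ((Finset.univ.val.map (fun i => ((d i : ℝ) : ℂ))).map (fun a => X - C a)).prod by
          rw [Multiset.map_map]; rfl,
      Polynomial.roots_multiset_prod_X_sub_C, Polynomial.roots_multiset_prod_X_sub_C] at h3
  have key2 : Finset.univ.val.map hA.eigenvalues = Finset.univ.val.map d := by
    apply Multiset.map_injective Complex.ofReal_injective
    rw [Multiset.map_map, Multiset.map_map]
    exact key
  calc ∑ i, g (hA.eigenvalues i)
      = ((Finset.univ.val.map hA.eigenvalues).map g).sum := by
        rw [Multiset.map_map]; rfl
    _ = ((Finset.univ.val.map d).map g).sum := by rw [key2]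
    _ = ∑ i, g (d i) := by rw [Multiset.map_map]; rfl

lemma conj_vecMulVec (M : Matrix n n ℂ) (x : n → ℂ) :
    M * Matrix.vecMulVec x (star x) * Mᴴ
      = Matrix.vecMulVec (M *ᵥ x) (star (M *ᵥ x)) := by
  ext i j
  simp only [Matrix.mul_apply, Matrix.vecMulVec_apply, Matrix.conjTranspose_apply,
    Pi.star_apply, Matrix.mulVec, dotProduct, star_sum, star_mul',
    Finset.sum_mul, Finset.mul_sum]
  exact Finset.sum_congr rfl fun u _ => Finset.sum_congr rfl fun v _ => by ring

lemma diag_conj_eq_sum (M : Matrix n n ℂ) (d : n → ℂ) :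
    M * Matrix.diagonal d * Mᴴ
      = ∑ u, d u • Matrix.vecMulVec (fun i => M i u) (star (fun i => M i u)) := by
  ext i j
  simp only [Matrix.mul_apply, Matrix.diagonal_apply, Matrix.conjTranspose_apply,
    Matrix.sum_apply, Matrix.smul_apply, Matrix.vecMulVec_apply, Pi.star_apply,
    mul_ite, ite_mul, zero_mul, mul_zero, Finset.sum_ite_eq, Finset.sum_ite_eq',
    Finset.mem_univ, if_true, smul_eq_mul]
  refine Finset.sum_congr rfl fun u _ => by ring

end Helpers


/-- Von Neumann entropy (base-2) of a matrix: −∑ λᵢ log₂ λᵢ over its eigenvalues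
(0 if the matrix is not Hermitian). -/
noncomputable def vnEntropy {n : Type*} [Fintype n] [DecidableEq n]
    (ρ : Matrix n n ℂ) : ℝ :=
  if h : ρ.IsHermitian then -∑ i, (h.eigenvalues i) * Real.logb 2 (h.eigenvalues i) else 0

lemma vnEntropy_eq {n : Type*} [Fintype n] [DecidableEq n] (A : Matrix n n ℂ) (d : n → ℝ)
    (U : Matrix n n ℂ) (hU : U * star U = 1)
    (h : A = U * Matrix.diagonal (fun i => (d i : ℂ)) * star U) :
    vnEntropy A = -∑ i, d i * Real.logb 2 (d i) := by
  have hh := herm_of_conj d U h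
  rw [vnEntropy, dif_pos hh,
    sum_g_eigenvalues hh d U hU h (fun x => x * Real.logb 2 x)]

/-- Partial trace over the second tensor factor. -/
noncomputable def ptraceB {m n : ℕ}
    (M : Matrix (Fin m × Fin n) (Fin m × Fin n) ℂ) :
    Matrix (Fin m) (Fin m) ℂ :=
  Matrix.of fun i k => ∑ j, M (i, j) (k, j)

/-- Partial trace over the first tensor factor. -/
noncomputable def ptraceA {m n : ℕ}
    (M : Matrix (Fin m × Fin n) (Fin m × Fin n) ℂ) :
    Matrix (Fin n) (Fin n) ℂ :=
  Matrix.of fun j l => ∑ i, M (i, j) (i, l)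

/-- Kraus operator K₀ = √s|0⟩⟨0| + |2⟩⟨1| of N_s. -/
noncomputable def Kr0 (s : ℝ) : Matrix (Fin 3) (Fin 3) ℂ :=
  !![(Real.sqrt s : ℂ), 0, 0; 0, 0, 0; 0, 1, 0]

/-- Kraus operator K₁ = √(1−s)|1⟩⟨0| + |2⟩⟨2| of N_s. -/
noncomputable def Kr1 (s : ℝ) : Matrix (Fin 3) (Fin 3) ℂ :=
  !![0, 0, 0; (Real.sqrt (1 - s) : ℂ), 0, 0; 0, 0, 1]

/-- |ψ⟩ = (1/√2)|0⟩⊗|0⟩ + √(s/2)|1⟩⊗|1⟩ + √((1−s)/2)|2⟩⊗|2⟩. -/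
noncomputable def psiEA (s : ℝ) : Fin 3 × Fin 3 → ℂ := fun p =>
  if p = (0, 0) then (Real.sqrt (1/2) : ℂ)
  else if p = (1, 1) then (Real.sqrt (s/2) : ℂ)
  else if p = (2, 2) then (Real.sqrt ((1 - s)/2) : ℂ) else 0

noncomputable def rr : ℂ := (Real.sqrt (1/2) : ℝ)

/-- explicit eigenvector unitary for σ -/
noncomputable def Wm : Matrix (Fin 3 × Fin 3) (Fin 3 × Fin 3) ℂ := fun p q =>
  if q = (0,0) then (if p = (0,0) ∨ p = (1,2) then rr else 0)
  else if q = (0,1) then (if p = (0,1) ∨ p = (2,2) then rr else 0)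
  else if q = (0,2) then (if p = (0,0) then rr else if p = (1,2) then -rr else 0)
  else if q = (1,0) then (if p = (0,1) then rr else if p = (2,2) then -rr else 0)
  else if q = (1,1) then (if p = (0,2) then 1 else 0)
  else if q = (1,2) then (if p = (1,0) then 1 else 0)
  else if q = (2,0) then (if p = (1,1) then 1 else 0)
  else if q = (2,1) then (if p = (2,0) then 1 else 0)
  else (if p = (2,1) then 1 else 0)

lemma hrr : rr * rr = (1/2 : ℂ) := by
  rw [rr, ← Complex.ofReal_mul, Real.mul_self_sqrt (by norm_num)]
  norm_num

lemma hrr' : star rr = rr := by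
  rw [rr, Complex.star_def, Complex.conj_ofReal]

set_option maxHeartbeats 2000000 in
lemma Wm_unitary : Wm * star Wm = 1 := by
  ext p q
  fin_cases p <;> fin_cases q <;>
    · simp only [Matrix.mul_apply, Matrix.star_apply, Fintype.sum_prod_type, Fin.sum_univ_three,
        Wm, Matrix.one_apply, Prod.mk.injEq, Prod.ext_iff, Fin.ext_iff]
      norm_num [hrr, hrr']

lemma hv0 (s : ℝ) (hs0 : 0 ≤ s) :
    ((1 : Matrix (Fin 3) (Fin 3) ℂ) ⊗ₖ Kr0 s) *ᵥ psiEA s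
      = fun p => if p = (0,0) ∨ p = (1,2) then ((Real.sqrt (s/2) : ℝ) : ℂ) else 0 := by
  have h1 : Real.sqrt s * Real.sqrt (1/2) = Real.sqrt (s/2) := by
    rw [← Real.sqrt_mul hs0, show s * (1/2) = s/2 by ring]
  have h2 : Real.sqrt (s/2) * Real.sqrt 2 = Real.sqrt s := by
    rw [← Real.sqrt_mul (by linarith), show s/2*2 = s by ring]
  funext p
  fin_cases p <;>
    simp [Matrix.mulVec, dotProduct, Fintype.sum_prod_type, Fin.sum_univ_three,
      Matrix.kroneckerMap_apply, Matrix.one_apply, Kr0, psiEA, Prod.mk.injEq,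
      ← Complex.ofReal_mul, h1, mul_comm] <;> try ring

lemma hv1 (s : ℝ) (hs1 : s ≤ 1) :
    ((1 : Matrix (Fin 3) (Fin 3) ℂ) ⊗ₖ Kr1 s) *ᵥ psiEA s
      = fun p => if p = (0,1) ∨ p = (2,2) then ((Real.sqrt ((1-s)/2) : ℝ) : ℂ) else 0 := by
  have h1 : Real.sqrt (1-s) * Real.sqrt (1/2) = Real.sqrt ((1-s)/2) := by
    rw [← Real.sqrt_mul (by linarith), show (1-s) * (1/2) = (1-s)/2 by ring]
  funext p
  fin_cases p <;>
    simp [Matrix.mulVec, dotProduct, Fintype.sum_prod_type, Fin.sum_univ_three,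
      Matrix.kroneckerMap_apply, Matrix.one_apply, Kr1, psiEA, Prod.mk.injEq,
      ← Complex.ofReal_mul, h1, mul_comm] <;> try ring

set_option maxHeartbeats 4000000 in
/-- Quantum mutual information of (I ⊗ N_s)(|ψ⟩⟨ψ|) equals 2, hence C_E(N_s) ≥ 2. -/
theorem stmt7 (s : ℝ) (hs : s ∈ Set.Icc (0 : ℝ) (1/2)) :
    let P : Matrix (Fin 3 × Fin 3) (Fin 3 × Fin 3) ℂ :=
      Matrix.vecMulVec (psiEA s) (star (psiEA s))
    let σ : Matrix (Fin 3 × Fin 3) (Fin 3 × Fin 3) ℂ :=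
      ((1 : Matrix (Fin 3) (Fin 3) ℂ) ⊗ₖ Kr0 s) * P * ((1 : Matrix (Fin 3) (Fin 3) ℂ) ⊗ₖ Kr0 s)ᴴ +
      ((1 : Matrix (Fin 3) (Fin 3) ℂ) ⊗ₖ Kr1 s) * P * ((1 : Matrix (Fin 3) (Fin 3) ℂ) ⊗ₖ Kr1 s)ᴴ
    vnEntropy (ptraceB σ) + vnEntropy (ptraceA σ) - vnEntropy σ = 2 := by
  intro P σ
  obtain ⟨hs0, hs1⟩ := hs
  have h1s : (0:ℝ) ≤ 1 - s := by linarith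
  have hm2 : Real.sqrt (s/2) * Real.sqrt (s/2) = s/2 := Real.mul_self_sqrt (by linarith)
  have hm4 : Real.sqrt ((1-s)/2) * Real.sqrt ((1-s)/2) = (1-s)/2 :=
    Real.mul_self_sqrt (by linarith)
  have hcs : ((Real.sqrt s : ℝ) : ℂ)^2 = (s : ℂ) := by
    rw [← Complex.ofReal_pow, Real.sq_sqrt hs0]
  have hc1s : ((Real.sqrt (1-s) : ℝ) : ℂ)^2 = ((1-s : ℝ) : ℂ) := by
    rw [← Complex.ofReal_pow, Real.sq_sqrt h1s]
  have hc2' : (((Real.sqrt 2 : ℝ) : ℂ))⁻¹^2 = 2⁻¹ := by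
    rw [inv_pow, ← Complex.ofReal_pow, Real.sq_sqrt (by norm_num)]
    norm_num
  have hq2 : ((Real.sqrt 2 : ℝ) : ℂ) * ((Real.sqrt 2 : ℝ) : ℂ) = 2 := by
    rw [← Complex.ofReal_mul, Real.mul_self_sqrt (by norm_num)]
    norm_num
  have hA1 : ((Real.sqrt s : ℝ) : ℂ) / ((Real.sqrt 2 : ℝ) : ℂ) *
      (((Real.sqrt s : ℝ) : ℂ) / ((Real.sqrt 2 : ℝ) : ℂ)) = (s : ℂ) / 2 := by
    rw [div_mul_div_comm, ← Complex.ofReal_mul, Real.mul_self_sqrt hs0, hq2]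
  have hA2 : ((Real.sqrt (1-s) : ℝ) : ℂ) / ((Real.sqrt 2 : ℝ) : ℂ) *
      (((Real.sqrt (1-s) : ℝ) : ℂ) / ((Real.sqrt 2 : ℝ) : ℂ)) = ((1-s : ℝ) : ℂ) / 2 := by
    rw [div_mul_div_comm, ← Complex.ofReal_mul, Real.mul_self_sqrt h1s, hq2]
  have hA3 : (((Real.sqrt 2 : ℝ) : ℂ))⁻¹ * (((Real.sqrt 2 : ℝ) : ℂ))⁻¹ = 2⁻¹ := by
    rw [← mul_inv, hq2]
  set v0 : Fin 3 × Fin 3 → ℂ :=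
    fun p => if p = (0,0) ∨ p = (1,2) then ((Real.sqrt (s/2) : ℝ) : ℂ) else 0 with hv0def
  set v1 : Fin 3 × Fin 3 → ℂ :=
    fun p => if p = (0,1) ∨ p = (2,2) then ((Real.sqrt ((1-s)/2) : ℝ) : ℂ) else 0 with hv1def
  have hσ : σ = Matrix.vecMulVec v0 (star v0) + Matrix.vecMulVec v1 (star v1) := by
    have hσd : σ = ((1 : Matrix (Fin 3) (Fin 3) ℂ) ⊗ₖ Kr0 s) *
        Matrix.vecMulVec (psiEA s) (star (psiEA s)) *
        ((1 : Matrix (Fin 3) (Fin 3) ℂ) ⊗ₖ Kr0 s)ᴴ +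
        ((1 : Matrix (Fin 3) (Fin 3) ℂ) ⊗ₖ Kr1 s) *
        Matrix.vecMulVec (psiEA s) (star (psiEA s)) *
        ((1 : Matrix (Fin 3) (Fin 3) ℂ) ⊗ₖ Kr1 s)ᴴ := rfl
    rw [hσd, conj_vecMulVec, conj_vecMulVec, hv0 s hs0, hv1 s (by linarith), hv0def, hv1def]
  have hρA : ptraceB σ =
      (1 : Matrix (Fin 3) (Fin 3) ℂ) *
        Matrix.diagonal (fun i => ((![1/2, s/2, (1-s)/2] i : ℝ) : ℂ)) *
        star (1 : Matrix (Fin 3) (Fin 3) ℂ) := by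
    rw [star_one, one_mul, mul_one, hσ]
    ext i k
    fin_cases i <;> fin_cases k <;>
      · simp [ptraceB, hv0def, hv1def, Matrix.vecMulVec_apply, Fin.sum_univ_three, Matrix.diagonal_apply,
          Prod.mk.injEq, Complex.star_def, Complex.conj_ofReal,
          ← Complex.ofReal_mul, hm2, hm4, hcs, hc1s, hc2']
        try (simp only [hcs, hc1s, hc2', hA1, hA2, hA3]; push_cast; ring)
        try (rw [div_mul_div_comm, ← Complex.ofReal_mul, Real.mul_self_sqrt hs0, hq2])
  have hρB : ptraceA σ =
      (1 : Matrix (Fin 3) (Fin 3) ℂ) *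
        Matrix.diagonal (fun i => ((![s/2, (1-s)/2, 1/2] i : ℝ) : ℂ)) *
        star (1 : Matrix (Fin 3) (Fin 3) ℂ) := by
    rw [star_one, one_mul, mul_one, hσ]
    ext i k
    fin_cases i <;> fin_cases k <;>
      · simp [ptraceA, hv0def, hv1def, Matrix.vecMulVec_apply, Fin.sum_univ_three, Matrix.diagonal_apply,
          Prod.mk.injEq, Complex.star_def, Complex.conj_ofReal,
          ← Complex.ofReal_mul, hm2, hm4, hcs, hc1s, hc2']
        try (simp only [hcs, hc1s, hc2', hA1, hA2, hA3]; push_cast; ring)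
        try (rw [div_mul_div_comm, ← Complex.ofReal_mul, Real.mul_self_sqrt hs0, hq2])
  set dS : Fin 3 × Fin 3 → ℝ :=
    fun p => if p = (0,0) then s else if p = (0,1) then 1-s else 0 with hdSdef
  have hσW : σ = Wm * Matrix.diagonal (fun p => ((dS p : ℝ) : ℂ)) * star Wm := by
    rw [Matrix.star_eq_conjTranspose, diag_conj_eq_sum, hσ]
    simp only [Fintype.sum_prod_type, Fin.sum_univ_three, hdSdef]
    norm_num
    ext p q
    fin_cases p <;> fin_cases q <;>
      · simp [Matrix.add_apply, hv0def, hv1def, Matrix.smul_apply, Matrix.vecMulVec_apply, Wm,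
          Prod.mk.injEq, Complex.star_def, Complex.conj_ofReal,
          ← Complex.ofReal_mul, hm2, hm4, hrr, hrr', rr, hcs, hc1s, hc2']
        try (simp only [hcs, hc1s, hc2', hA1, hA2, hA3]; push_cast; ring)
        try (rw [div_mul_div_comm, ← Complex.ofReal_mul, Real.mul_self_sqrt hs0, hq2])
  rw [vnEntropy_eq (ptraceB σ) ![1/2, s/2, (1-s)/2] 1 (by simp) hρA,
      vnEntropy_eq (ptraceA σ) ![s/2, (1-s)/2, 1/2] 1 (by simp) hρB,
      vnEntropy_eq σ dS Wm Wm_unitary hσW]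
  have hlogh : Real.logb 2 (1/2) = -1 := by
    rw [one_div, Real.logb_inv, Real.logb_self_eq_one (by norm_num)]
  have key : ∀ x : ℝ, 0 ≤ x → 2 * ((x/2) * Real.logb 2 (x/2)) = x * Real.logb 2 x - x := by
    intro x hx
    rcases eq_or_lt_of_le hx with h|h
    · simp [← h]
    · rw [Real.logb_div (ne_of_gt h) two_ne_zero, Real.logb_self_eq_one (by norm_num)]
      ring
  simp only [Fintype.sum_prod_type, Fin.sum_univ_three, hdSdef, Matrix.cons_val_zero,
    Matrix.cons_val_one, Matrix.head_cons, Matrix.cons_val_two, Matrix.tail_cons]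
  norm_num [Prod.ext_iff, Fin.ext_iff]
  linarith [key s hs0, key (1-s) h1s, hlogh]
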